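/- If a linear layer y = Wx + b with differentiable loss L satisfies ∂L/∂b_i ≠ 0 for some index i, then the input x can be exactly recovered as x = (∇_{W^i} L) / (∂L/∂b_i), entrywise division by the scalar ∂L/∂b_i. -/

import Mathlib

lemma deriv_line {k : ℕ} (L : (Fin k → ℝ) → ℝ) (y v : Fin k → ℝ)
    (hL : DifferentiableAt ℝ L y) :
    deriv (fun s : ℝ => L (y + s • v)) 0 = fderiv ℝ L y v := by
  have hc : HasDerivAt (fun s : ℝ => y + s • v) v 0 := by
    simpa using ((hasDerivAt_id (0:ℝ)).smul_const v).const_add y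
  have h0 : y + (0:ℝ) • v = y := by simp
  have := (h0 ▸ hL).hasFDerivAt.comp_hasDerivAt 0 hc
  simpa [h0, Function.comp_def] using this.deriv

/-- For a linear layer `y = W x + b` with differentiable loss `L`, if the bias
gradient entry `∂L/∂b i` is nonzero, then the input `x` is exactly recovered by
entrywise division of the `i`-th row of the weight gradient by `∂L/∂b i`. -/
theorem linear_layer_input_recovery
    (k m : ℕ) (W : Matrix (Fin k) (Fin m) ℝ) (b : Fin k → ℝ) (x : Fin m → ℝ)
    (L : (Fin k → ℝ) → ℝ)
    (hL : DifferentiableAt ℝ L (W.mulVec x + b)) (i : Fin k)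
    (hb : deriv (fun s : ℝ => L (W.mulVec x + (b + s • (Pi.single i 1 : Fin k → ℝ)))) 0 ≠ 0) :
    ∀ j : Fin m,
      x j = deriv (fun s : ℝ =>
          L ((W + s • Matrix.single i j 1).mulVec x + b)) 0
        / deriv (fun s : ℝ => L (W.mulVec x + (b + s • (Pi.single i 1 : Fin k → ℝ)))) 0 := by
  intro j
  set y := W.mulVec x + b with hy
  have hbias : (fun s : ℝ => L (W.mulVec x + (b + s • (Pi.single i 1 : Fin k → ℝ))))
      = fun s : ℝ => L (y + s • (Pi.single i 1 : Fin k → ℝ)) := by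
    funext s; rw [hy]; ring_nf
  have hEmul : ∀ s : ℝ, (W + s • Matrix.single i j 1).mulVec x
      = y + s • (x j • (Pi.single i 1 : Fin k → ℝ)) + (-b) := by
    intro s
    funext r
    simp only [Matrix.mulVec, dotProduct, Matrix.add_apply, Matrix.smul_apply,
      Matrix.single, hy, Pi.add_apply, Pi.smul_apply, Pi.neg_apply, smul_eq_mul]
    simp only [add_mul]
    rw [Finset.sum_add_distrib]
    have hs : ∑ c : Fin m, s * Matrix.of (fun i' j' => if i = i' ∧ j = j' then (1:ℝ) else 0) r c * x c
        = s * (x j * (Pi.single i 1 : Fin k → ℝ) r) := by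
      rw [Finset.sum_eq_single j]
      · by_cases h : r = i <;> simp [h, Pi.single_apply, mul_comm, eq_comm (a := r)]
        exact fun h2 => absurd h2.symm h
      · intro c _ hc; simp [hc.symm]
      · simp
    simp only [mul_assoc] at hs ⊢
    rw [hs]; ring
  have hweight : (fun s : ℝ => L ((W + s • Matrix.single i j 1).mulVec x + b))
      = fun s : ℝ => L (y + s • (x j • (Pi.single i 1 : Fin k → ℝ))) := by
    funext s; rw [hEmul s]; ring_nf
  rw [hbias, hweight, deriv_line L y _ hL, deriv_line L y _ hL, map_smul, smul_eq_mul]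
  rw [hbias, deriv_line L y _ hL] at hb
  field_simp
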